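/- Let $\varphi : M \to M$ be a measure-preserving homeomorphism of a compact metric probability space $(M, \mu)$ such that for every $m \ge 1$ the set of periodic points of period $\le m$ has measure zero, and such that $\mu$ is a Borel measure positive on open balls with $\mu(B(x,\eta)) $ comparable to $\pi\eta^2$ (e.g., $M$ is the two-torus with Lebesgue measure and $\varphi$ an aperiodic area-preserving diffeomorphism). Then for every $\varepsilon > 0$ there exist $N \in \mathbb{N}$ and an open set $V \subset M$ with $\mu(M \setminus V) < \varepsilon$ and $\bigcap_{|n| \le N} \varphi^{-n}(V) = \emptyset$. -/

import Mathlib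

open MeasureTheory Metric

/-- Large open sets with empty maximal invariant subset for an aperiodic
measure-preserving homeomorphism of a compact metric probability space whose
measure of balls is comparable to `π η²`. -/
theorem stmt13 {M : Type*} [MetricSpace M] [CompactSpace M] [MeasurableSpace M] [BorelSpace M]
    (μ : Measure M) [IsProbabilityMeasure μ]
    (f : M ≃ₜ M) (hpres : MeasurePreserving f μ μ)
    (haper : ∀ m : ℕ, 1 ≤ m → μ {x | (⇑f)^[m] x = x} = 0)
    (c₁ c₂ : ℝ) (hc₁ : 0 < c₁) (hc₂ : 0 < c₂)
    (hball : ∀ (x : M) (η : ℝ), 0 < η → η ≤ 1 →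
      ENNReal.ofReal (c₁ * Real.pi * η ^ 2) ≤ μ (ball x η) ∧
      μ (ball x η) ≤ ENNReal.ofReal (c₂ * Real.pi * η ^ 2)) :
    ∀ ε : ℝ, 0 < ε → ∃ (N : ℕ) (V : Set M), IsOpen V ∧ μ Vᶜ < ENNReal.ofReal ε ∧
      (⋂ n ∈ Set.Icc (-(N : ℤ)) (N : ℤ), (f.toEquiv ^ n) ⁻¹' V) = ∅ := by
  intro ε hε
  -- basic facts about the powers of `f`
  have hsymm : MeasurePreserving (⇑f.symm) μ μ := by
    have h0 : MeasurePreserving (⇑f.toMeasurableEquiv) μ μ := by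
      simpa [Homeomorph.toMeasurableEquiv_coe] using hpres
    simpa [Homeomorph.toMeasurableEquiv_symm_coe] using h0.symm _
  have hTmp : ∀ t : ℤ, MeasurePreserving ⇑(f.toEquiv ^ t) μ μ := by
    intro t
    induction t using Int.induction_on with
    | zero => simpa using MeasurePreserving.id μ
    | succ k ih =>
        have h1 : (f.toEquiv ^ ((k : ℤ) + 1)) = f.toEquiv ^ (k : ℤ) * f.toEquiv := zpow_add_one _ _
        rw [h1]
        have h2 : ⇑(f.toEquiv ^ (k : ℤ) * f.toEquiv) = ⇑(f.toEquiv ^ (k : ℤ)) ∘ ⇑f.toEquiv :=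
          Equiv.Perm.coe_mul _ _
        rw [h2]
        exact ih.comp hpres
    | pred k ih =>
        have h1 : (f.toEquiv ^ (-(k : ℤ) - 1)) = f.toEquiv ^ (-(k : ℤ)) * (f.toEquiv)⁻¹ :=
          zpow_sub_one _ _
        rw [h1]
        have h2 : ⇑(f.toEquiv ^ (-(k : ℤ)) * (f.toEquiv)⁻¹)
            = ⇑(f.toEquiv ^ (-(k : ℤ))) ∘ ⇑(f.toEquiv)⁻¹ := Equiv.Perm.coe_mul _ _
        rw [h2]
        have h3 : ⇑(f.toEquiv)⁻¹ = ⇑f.symm := rfl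
        rw [h3]
        exact ih.comp hsymm
  have hTcont : ∀ t : ℤ, Continuous ⇑(f.toEquiv ^ t) := by
    intro t
    induction t using Int.induction_on with
    | zero => simpa using continuous_id
    | succ k ih =>
        rw [zpow_add_one, Equiv.Perm.coe_mul]
        exact ih.comp f.continuous
    | pred k ih =>
        rw [zpow_sub_one, Equiv.Perm.coe_mul]
        exact ih.comp f.symm.continuous
  have hTimg : ∀ (t : ℤ) (S : Set M), (f.toEquiv ^ t) '' S = (f.toEquiv ^ (-t)) ⁻¹' S := by
    intro t S
    rw [Equiv.image_eq_preimage_symm]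
    have h : (f.toEquiv ^ t).symm = f.toEquiv ^ (-t) := by
      rw [zpow_neg]; rfl
    rw [h]
  have hTadd : ∀ (t s : ℤ) (y : M),
      (f.toEquiv ^ t) ((f.toEquiv ^ s) y) = (f.toEquiv ^ (t + s)) y := by
    intro t s y
    rw [← Equiv.Perm.mul_apply, ← zpow_add]
  have hTiter : ∀ (k : ℕ) (y : M), (f.toEquiv ^ (k : ℤ)) y = (⇑f)^[k] y := by
    intro k y
    rw [zpow_natCast, ← Equiv.Perm.iterate_eq_pow]
    rfl
  have hTzero : ∀ y : M, (f.toEquiv ^ (0 : ℤ)) y = y := by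
    intro y; rw [zpow_zero]; rfl
  have hTmeasset : ∀ (u : ℤ) (S : Set M), MeasurableSet S →
      MeasurableSet ((f.toEquiv ^ u) '' S) := by
    intro u S hS; rw [hTimg]; exact hS.preimage (hTcont _).measurable
  have hTμ : ∀ (u : ℤ) (S : Set M), MeasurableSet S → μ ((f.toEquiv ^ u) '' S) = μ S := by
    intro u S hS; rw [hTimg]; exact (hTmp (-u)).measure_preimage hS.nullMeasurableSet
  -- null spheres of generic radius
  have hsph : ∀ (x : M) (a b : ℝ), a < b → ∃ ρ, a < ρ ∧ ρ < b ∧ μ (sphere x ρ) = 0 := by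
    intro x a b hab
    by_contra hcon
    push_neg at hcon
    have hcnt : Set.Countable {ρ : ↥(Set.Ioo a b) | 0 < μ (sphere x (ρ : ℝ))} := by
      apply MeasureTheory.Measure.countable_meas_pos_of_disjoint_iUnion
        (As := fun ρ : ↥(Set.Ioo a b) => sphere x (ρ : ℝ))
      · intro ρ; exact isClosed_sphere.measurableSet
      · intro ρ ρ' hne
        refine Set.disjoint_left.mpr fun y hy hy' => ?_
        apply hne
        apply Subtype.ext
        rw [mem_sphere] at hy hy'
        rw [← hy, ← hy']
    have huniv : {ρ : ↥(Set.Ioo a b) | 0 < μ (sphere x (ρ : ℝ))} = Set.univ := by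
      ext ρ
      simp only [Set.mem_setOf_eq, Set.mem_univ, iff_true]
      exact zero_lt_iff.mpr (hcon (ρ : ℝ) ρ.2.1 ρ.2.2)
    rw [huniv] at hcnt
    have hC : Countable ↥(Set.Ioo a b) := Set.countable_univ_iff.mp hcnt
    have h1 : Cardinal.mk ↥(Set.Ioo a b) ≤ Cardinal.aleph0 := Cardinal.mk_le_aleph0
    rw [Cardinal.mk_Ioo_real hab] at h1
    exact absurd h1 (not_le.mpr Cardinal.aleph0_lt_continuum)
  -- choice of the height parameter `n`
  set n : ℕ := ⌈1/ε⌉₊ + 1 with hn_def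
  have hn1 : 1 ≤ n := by omega
  have hreal : ((2*n+1 : ℕ) : ℝ)⁻¹ < ε/2 := by
    have h1 : (1:ℝ)/ε ≤ (⌈1/ε⌉₊ : ℝ) := Nat.le_ceil _
    have h2 : (2:ℝ)/ε < ((2*n+1 : ℕ) : ℝ) := by
      push_cast [hn_def]
      rw [div_lt_iff₀ hε]
      have h1' : 1 ≤ ε * (⌈1/ε⌉₊ : ℝ) := by
        have := (div_le_iff₀ hε).mp h1
        linarith [this]
      nlinarith [h1', hε]
    have h3 : (0:ℝ) < (2:ℝ)/ε := by positivity
    calc ((2*n+1 : ℕ) : ℝ)⁻¹ < ((2:ℝ)/ε)⁻¹ := by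
          apply inv_strictAnti₀ h3 h2
      _ = ε/2 := by rw [inv_div]
  -- the set of low-period points and an open neighborhood
  set P : Set M := ⋃ k ∈ Finset.Icc 1 (2*n), {x : M | (⇑f)^[k] x = x} with hP_def
  have hPclosed : IsClosed P := by
    apply Set.Finite.isClosed_biUnion (Finset.finite_toSet _)
    intro k _
    exact isClosed_eq (f.continuous.iterate k) continuous_id
  have hPnull : μ P = 0 := by
    have h1 : μ P ≤ ∑ k ∈ Finset.Icc 1 (2*n), μ {x : M | (⇑f)^[k] x = x} :=
      measure_biUnion_finset_le _ _
    have h2 : ∑ k ∈ Finset.Icc 1 (2*n), μ {x : M | (⇑f)^[k] x = x} = 0 := by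
      apply Finset.sum_eq_zero
      intro k hk
      exact haper k (Finset.mem_Icc.mp hk).1
    exact le_antisymm (h2 ▸ h1) (zero_le)
  have hPsmall : μ P < ENNReal.ofReal (ε/2) := by
    rw [hPnull]
    exact ENNReal.ofReal_pos.mpr (half_pos hε)
  obtain ⟨U₂, hU₂sub, hU₂open, hU₂meas⟩ := Set.exists_isOpen_lt_of_lt P _ hPsmall
  obtain ⟨U₁, hU₁open, hPU₁, hU₁cl⟩ := normal_exists_closure_subset hPclosed hU₂open hU₂sub
  -- the compact set of points that are not close to low-period points
  set G : Set M := U₁ᶜ with hG_def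
  have hGclosed : IsClosed G := isClosed_compl_iff.mpr hU₁open
  have hGcomp : IsCompact G := hGclosed.isCompact
  have hGP : ∀ x ∈ G, ∀ k, 1 ≤ k → k ≤ 2*n → (⇑f)^[k] x ≠ x := by
    intro x hx k hk1 hk2 hfix
    apply hx
    apply hPU₁
    exact Set.mem_biUnion (Finset.mem_Icc.mpr ⟨hk1, hk2⟩) hfix
  -- local radii with disjoint iterates
  have aux : ∀ (L : ℕ) (x : M), (∀ k, 1 ≤ k → k ≤ 2*n → (⇑f)^[k] x ≠ x) →
      ∃ η : ℝ, 0 < η ∧ ∀ k, 1 ≤ k → k ≤ L → k ≤ 2*n → ∀ z, dist z x ≤ 2*η →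
        2*η < dist ((⇑f)^[k] z) x := by
    intro L x hx
    induction L with
    | zero => exact ⟨1, one_pos, by omega⟩
    | succ L ih =>
        obtain ⟨η₀, hη₀, hP0⟩ := ih
        by_cases hL : L + 1 ≤ 2*n
        · set d := dist ((⇑f)^[L+1] x) x with hd_def
          have hd : 0 < d := dist_pos.mpr (hx (L+1) (by omega) hL)
          have hcont : Continuous ((⇑f)^[L+1]) := f.continuous.iterate _
          obtain ⟨δ, hδ, hδP⟩ := Metric.continuous_iff.mp hcont x (d/3) (by positivity)
          refine ⟨min η₀ (min (δ/3) (d/6)), by positivity, ?_⟩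
          intro k hk1 hk2 hk3 z hz
          rcases Nat.lt_or_ge k (L+1) with hkL | hkL
          · have h2 : min η₀ (min (δ/3) (d/6)) ≤ η₀ := min_le_left _ _
            have h1 := hP0 k hk1 (by omega) hk3 z (by linarith)
            linarith
          · have hk : k = L + 1 := by omega
            subst hk
            have hzδ : dist z x < δ := by
              have h1 : min η₀ (min (δ/3) (d/6)) ≤ δ/3 :=
                le_trans (min_le_right _ _) (min_le_left _ _)
              linarith
            have h2 := hδP z hzδ
            have h3 : d ≤ dist ((⇑f)^[L+1] x) ((⇑f)^[L+1] z) + dist ((⇑f)^[L+1] z) x :=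
              dist_triangle _ _ _
            rw [dist_comm] at h2
            have h4 : min η₀ (min (δ/3) (d/6)) ≤ d/6 :=
              le_trans (min_le_right _ _) (min_le_right _ _)
            linarith
        · exact ⟨η₀, hη₀, fun k hk1 hk2 hk3 => hP0 k hk1 (by omega) hk3⟩
  have hkey : ∀ x ∈ G, ∃ η : ℝ, 0 < η ∧ ∀ k, 1 ≤ k → k ≤ 2*n → k ≤ 2*n → ∀ z,
      dist z x ≤ 2*η → 2*η < dist ((⇑f)^[k] z) x := by
    intro x hx
    exact aux (2*n) x (hGP x hx)
  choose! ηf hηf hprop using hkey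
  -- finite subcover
  obtain ⟨sc, hsc⟩ := hGcomp.elim_finite_subcover (fun x : ↥G => ball (x : M) (ηf x))
    (fun _ => isOpen_ball)
    (by
      intro x hx
      exact Set.mem_iUnion.mpr ⟨⟨x, hx⟩, mem_ball_self (hηf x hx)⟩)
  have hMne : Nonempty M := by
    by_contra h
    rw [not_nonempty_iff] at h
    have h1 : μ Set.univ = 1 := measure_univ
    rw [Set.univ_eq_empty_iff.mpr h] at h1
    simp at h1
  have hMinh : Inhabited M := Classical.inhabited_of_nonempty hMne
  set l : List ↥G := sc.toList with hl_def
  set m : ℕ := l.length with hm_def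
  set c : ℕ → M := fun i => if h : i < l.length then ((l.get ⟨i, h⟩ : ↥G) : M) else default
    with hc_def
  have hcG : ∀ i, i < m → c i ∈ G := by
    intro i hi
    simp only [hc_def, dif_pos (hm_def ▸ hi)]
    exact (l.get ⟨i, hm_def ▸ hi⟩).2
  have hcov : ∀ y ∈ G, ∃ i, i < m ∧ y ∈ ball (c i) (ηf (c i)) := by
    intro y hy
    have hy2 := hsc hy
    rw [Set.mem_iUnion₂] at hy2
    obtain ⟨x, hxs, hyx⟩ := hy2
    have hxl : x ∈ l := by rw [hl_def, Finset.mem_toList]; exact hxs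
    obtain ⟨k, hk⟩ := List.mem_iff_get.mp hxl
    refine ⟨k, k.2, ?_⟩
    have hck : c (k : ℕ) = (x : M) := by
      simp only [hc_def, dif_pos k.2]
      rw [← hk]
    rw [hck]
    exact hyx
  -- generic radii
  have hrad : ∀ i, i < m → ∃ ρ, ηf (c i) < ρ ∧ ρ < 2*ηf (c i) ∧ μ (sphere (c i) ρ) = 0 := by
    intro i hi
    have h0 : 0 < ηf (c i) := hηf _ (hcG i hi)
    exact hsph (c i) _ _ (by linarith)
  choose! ρr hρ1 hρ2 hρ3 using hrad
  -- the castle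
  set KK : ℕ → Set M := fun i => closedBall (c i) (ρr i) \
      ⋃ j ∈ Finset.range i, ⋃ u ∈ Finset.Icc (-(2*n : ℤ)) (2*n : ℤ),
        (f.toEquiv ^ u) '' ball (c j) (ρr j) with hKK_def
  have hKKclosed : ∀ i, IsClosed (KK i) := by
    intro i
    apply IsClosed.sdiff isClosed_closedBall
    apply isOpen_biUnion; intro j _
    apply isOpen_biUnion; intro u _
    rw [hTimg]
    exact isOpen_ball.preimage (hTcont _)
  have hKKmeas : ∀ i, MeasurableSet (KK i) := fun i => (hKKclosed i).measurableSet
  set FF : Set M := closure U₁ ∪ ⋃ i ∈ Finset.range m, KK i with hFF_def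
  have hFFclosed : IsClosed FF :=
    isClosed_closure.union
      (Set.Finite.isClosed_biUnion (Finset.finite_toSet _) (fun i _ => hKKclosed i))
  -- per-center disjointness of iterates
  have hdisj : ∀ i, i < m → ∀ u : ℤ, u ≠ 0 → |u| ≤ (2*n : ℤ) →
      ∀ y, y ∈ closedBall (c i) (ρr i) → y ∉ (f.toEquiv ^ u) '' closedBall (c i) (ρr i) := by
    intro i hi u hu0 hub y hy hmem
    obtain ⟨w, hw, hwy⟩ := hmem
    have hciG := hcG i hi
    have h0 : 0 < ηf (c i) := hηf _ hciG
    have hρle : ρr i ≤ 2 * ηf (c i) := le_of_lt (hρ2 i hi)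
    have hkey2 : ∀ k, 1 ≤ k → k ≤ 2*n → ∀ z, dist z (c i) ≤ ρr i →
        ρr i < dist ((⇑f)^[k] z) (c i) := by
      intro k hk1 hk2 z hz
      have h1 := hprop (c i) hciG k hk1 hk2 hk2 z (le_trans hz hρle)
      linarith
    obtain ⟨hub1, hub2⟩ := abs_le.mp hub
    rcases lt_trichotomy u 0 with hneg | hzero | hpos
    · set k := (-u).toNat with hk_def
      have hk1 : 1 ≤ k := by omega
      have hk2 : k ≤ 2*n := by omega
      have hw_eq : (⇑f)^[k] y = w := by
        have h3 : (f.toEquiv ^ (-u)) y = w := by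
          rw [← hwy, hTadd, neg_add_cancel, hTzero]
        rw [← h3, ← hTiter k y]
        have h4 : ((k : ℕ) : ℤ) = -u := by omega
        rw [h4]
      have h5 := hkey2 k hk1 hk2 y (mem_closedBall.mp hy)
      rw [hw_eq] at h5
      exact absurd (mem_closedBall.mp hw) (not_le.mpr h5)
    · exact hu0 hzero
    · set k := u.toNat with hk_def
      have hk1 : 1 ≤ k := by omega
      have hk2 : k ≤ 2*n := by omega
      have hy_eq : (⇑f)^[k] w = y := by
        rw [← hTiter k w]
        have h4 : ((k : ℕ) : ℤ) = u := by omega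
        rw [h4, hwy]
      have h5 := hkey2 k hk1 hk2 w (mem_closedBall.mp hw)
      rw [hy_eq] at h5
      exact absurd (mem_closedBall.mp hy) (not_le.mpr h5)
  -- cross disjointness up to null sets
  have hcore : ∀ i j, j < i → i < m → ∀ u : ℤ, |u| ≤ (2*n : ℤ) →
      μ (KK i ∩ (f.toEquiv ^ u) '' KK j) = 0 := by
    intro i j hji him u hub
    have hsub : KK i ∩ (f.toEquiv ^ u) '' KK j ⊆ (f.toEquiv ^ u) '' (sphere (c j) (ρr j)) := by
      rintro y ⟨hyi, hyj⟩
      obtain ⟨w, hw, hwy⟩ := hyj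
      have hwcb : w ∈ closedBall (c j) (ρr j) := hw.1
      by_cases hwball : w ∈ ball (c j) (ρr j)
      · exfalso
        apply hyi.2
        refine Set.mem_biUnion (Finset.mem_range.mpr hji) ?_
        refine Set.mem_biUnion (Finset.mem_Icc.mpr (abs_le.mp hub)) ?_
        exact ⟨w, hwball, hwy⟩
      · refine ⟨w, ?_, hwy⟩
        rw [← closedBall_diff_ball]
        exact ⟨hwcb, hwball⟩
    refine measure_mono_null hsub ?_
    rw [hTμ u _ isClosed_sphere.measurableSet]
    exact hρ3 j (lt_trans hji him)
  have hsame : ∀ i, i < m → ∀ u : ℤ, u ≠ 0 → |u| ≤ (2*n : ℤ) →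
      μ (KK i ∩ (f.toEquiv ^ u) '' KK i) = 0 := by
    intro i him u hu0 hub
    have hempty : KK i ∩ (f.toEquiv ^ u) '' KK i = ∅ := by
      rw [Set.eq_empty_iff_forall_notMem]
      rintro y ⟨hy1, hy2⟩
      have hy2' : y ∈ (f.toEquiv ^ u) '' closedBall (c i) (ρr i) :=
        Set.image_mono (fun w hw => hw.1) hy2
      exact hdisj i him u hu0 hub y hy1.1 hy2'
    rw [hempty]
    exact measure_empty
  -- composition identities for images
  have hcomp_id : ∀ (u : ℤ) (B : Set M),
      (f.toEquiv ^ (-u)) '' ((f.toEquiv ^ u) '' B) = B := by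
    intro u B
    rw [← Set.image_comp]
    have h : ⇑(f.toEquiv ^ (-u)) ∘ ⇑(f.toEquiv ^ u) = id := by
      funext x
      simp only [Function.comp_apply, id_eq]
      rw [hTadd, neg_add_cancel, hTzero]
    rw [h, Set.image_id]
  have himg_inter : ∀ (t s : ℤ) (A B : Set M),
      ((f.toEquiv ^ t) '' A) ∩ ((f.toEquiv ^ s) '' B)
        = (f.toEquiv ^ t) '' (A ∩ (f.toEquiv ^ (s - t)) '' B) := by
    intro t s A B
    rw [Set.image_inter (Equiv.injective _)]
    congr 1
    rw [← Set.image_comp]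
    have h : ⇑(f.toEquiv ^ t) ∘ ⇑(f.toEquiv ^ (s - t)) = ⇑(f.toEquiv ^ s) := by
      funext x
      simp only [Function.comp_apply]
      rw [hTadd]
      congr 1
      ring
    rw [h]
  -- the measure bound via almost disjointness
  set F2 : Finset (ℕ × ℕ) := (Finset.range m) ×ˢ (Finset.range (2*n+1)) with hF2_def
  set g : ℕ × ℕ → Set M := fun p => (f.toEquiv ^ (p.2 : ℤ)) '' KK p.1 with hg_def
  have hpair : (↑F2 : Set (ℕ × ℕ)).Pairwise (Function.onFun (AEDisjoint μ) g) := by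
    rintro ⟨i, t⟩ hp ⟨j, s⟩ hq hpq
    rw [Finset.mem_coe, hF2_def, Finset.mem_product, Finset.mem_range, Finset.mem_range] at hp hq
    obtain ⟨him, htn⟩ := hp
    obtain ⟨hjm, hsn⟩ := hq
    show μ (g (i, t) ∩ g (j, s)) = 0
    have hrw : g (i, t) ∩ g (j, s)
        = (f.toEquiv ^ (t : ℤ)) '' (KK i ∩ (f.toEquiv ^ ((s : ℤ) - t)) '' KK j) :=
      himg_inter _ _ _ _
    set u : ℤ := (s : ℤ) - t with hu_def
    have hub : |u| ≤ (2*n : ℤ) := by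
      rw [abs_le]
      omega
    have hmeas2 : MeasurableSet (KK i ∩ (f.toEquiv ^ u) '' KK j) :=
      (hKKmeas i).inter (hTmeasset _ _ (hKKmeas j))
    rw [hrw, hTμ _ _ hmeas2]
    rcases eq_or_ne i j with hij | hij
    · subst hij
      have hts : t ≠ s := by
        intro h
        exact hpq (by rw [h])
      have hu0 : u ≠ 0 := by
        simp only [hu_def]
        omega
      exact hsame i him u hu0 hub
    · rcases hij.lt_or_gt with hlt | hlt
      · -- i < j : swap roles
        calc μ (KK i ∩ (f.toEquiv ^ u) '' KK j)
            = μ ((f.toEquiv ^ (-u)) '' (KK i ∩ (f.toEquiv ^ u) '' KK j)) :=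
              (hTμ (-u) _ hmeas2).symm
          _ = μ (((f.toEquiv ^ (-u)) '' KK i) ∩ KK j) := by
              rw [Set.image_inter (Equiv.injective _), hcomp_id]
          _ = μ (KK j ∩ (f.toEquiv ^ (-u)) '' KK i) := by rw [Set.inter_comm]
          _ = 0 := hcore j i hlt hjm (-u) (by rwa [abs_neg])
      · exact hcore i j hlt him u hub
  have hunion : ∑ p ∈ F2, μ (g p) = μ (⋃ p ∈ F2, g p) :=
    (measure_biUnion_finset₀ hpair
      (fun p _ => (hTmeasset _ _ (hKKmeas p.1)).nullMeasurableSet)).symm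
  have hle1 : μ (⋃ p ∈ F2, g p) ≤ 1 := by
    calc μ (⋃ p ∈ F2, g p) ≤ μ Set.univ := measure_mono (Set.subset_univ _)
      _ = 1 := measure_univ
  have hsum_eq : ∑ p ∈ F2, μ (g p)
      = ((2*n+1 : ℕ) : ENNReal) * ∑ i ∈ Finset.range m, μ (KK i) := by
    rw [hF2_def, Finset.sum_product]
    have h1 : ∀ i ∈ Finset.range m, ∑ t ∈ Finset.range (2*n+1), μ (g (i, t))
        = ((2*n+1 : ℕ) : ENNReal) * μ (KK i) := by
      intro i _
      have h2 : ∀ t ∈ Finset.range (2*n+1), μ (g (i, t)) = μ (KK i) := by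
        intro t _
        exact hTμ _ _ (hKKmeas i)
      rw [Finset.sum_congr rfl h2, Finset.sum_const, Finset.card_range, nsmul_eq_mul]
    rw [Finset.sum_congr rfl h1, ← Finset.mul_sum]
  have hSle : ∑ i ∈ Finset.range m, μ (KK i) ≤ (((2*n+1 : ℕ)) : ENNReal)⁻¹ := by
    rw [ENNReal.le_inv_iff_mul_le, mul_comm]
    rw [← hsum_eq]
    rw [hunion]
    exact hle1
  have hinv : (((2*n+1 : ℕ)) : ENNReal)⁻¹ < ENNReal.ofReal (ε/2) := by
    rw [← ENNReal.ofReal_natCast (2*n+1), ← ENNReal.ofReal_inv_of_pos (by positivity)]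
    exact (ENNReal.ofReal_lt_ofReal_iff (half_pos hε)).mpr hreal
  have hμFF : μ FF < ENNReal.ofReal ε := by
    have h1 : μ FF ≤ μ (closure U₁) + ∑ i ∈ Finset.range m, μ (KK i) := by
      refine le_trans (measure_union_le _ _) ?_
      exact add_le_add le_rfl (measure_biUnion_finset_le _ _)
    have h2 : μ (closure U₁) < ENNReal.ofReal (ε/2) :=
      lt_of_le_of_lt (measure_mono hU₁cl) hU₂meas
    calc μ FF ≤ μ (closure U₁) + ∑ i ∈ Finset.range m, μ (KK i) := h1
      _ < ENNReal.ofReal (ε/2) + ENNReal.ofReal (ε/2) :=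
          ENNReal.add_lt_add h2 (lt_of_le_of_lt hSle hinv)
      _ = ENNReal.ofReal ε := by
          rw [← ENNReal.ofReal_add (by positivity) (by positivity)]
          norm_num
  -- the sweeping claim
  have claim : ∀ i, i < m → ∀ y ∈ closedBall (c i) (ρr i),
      ∃ t : ℤ, |t| ≤ ((2*n*(i+1) : ℕ) : ℤ) ∧ (f.toEquiv ^ t) y ∈ FF := by
    intro i
    induction i using Nat.strong_induction_on with
    | _ i ih =>
      intro him y hy
      by_cases hyK : y ∈ KK i
      · refine ⟨0, by simp, ?_⟩
        rw [hTzero]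
        exact Set.mem_union_right _ (Set.mem_biUnion (Finset.mem_range.mpr him) hyK)
      · have hyU : y ∈ ⋃ j ∈ Finset.range i, ⋃ u ∈ Finset.Icc (-(2*n : ℤ)) (2*n : ℤ),
            (f.toEquiv ^ u) '' ball (c j) (ρr j) := by
          by_contra hcon
          exact hyK ⟨hy, hcon⟩
        rw [Set.mem_iUnion₂] at hyU
        obtain ⟨j, hj, hyU⟩ := hyU
        rw [Set.mem_iUnion₂] at hyU
        obtain ⟨u, hu, hyu⟩ := hyU
        obtain ⟨w, hw, hwy⟩ := hyu
        have hji : j < i := Finset.mem_range.mp hj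
        have hw' : w ∈ closedBall (c j) (ρr j) := ball_subset_closedBall hw
        obtain ⟨s, hsb, hsF⟩ := ih j hji (lt_trans hji him) w hw'
        refine ⟨s + -u, ?_, ?_⟩
        · have habs : |s + -u| ≤ |s| + |u| := by
            calc |s + -u| ≤ |s| + |-u| := abs_add_le _ _
              _ = |s| + |u| := by rw [abs_neg]
          have hub : |u| ≤ (2*n : ℤ) := abs_le.mpr (Finset.mem_Icc.mp hu)
          have hstep : ((2*n*(j+1) : ℕ) : ℤ) + 2*n ≤ ((2*n*(i+1) : ℕ) : ℤ) := by
            push_cast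
            nlinarith [hji]
          linarith [hsb, hub, habs, hstep]
        · have heq : (f.toEquiv ^ (s + -u)) y = (f.toEquiv ^ s) w := by
            rw [← hwy, hTadd]
            have h6 : s + -u + u = s := by ring
            rw [h6]
          rw [heq]
          exact hsF
  -- conclusion
  refine ⟨2*n*(m+1), FFᶜ, hFFclosed.isOpen_compl, ?_, ?_⟩
  · rw [compl_compl]
    exact hμFF
  · rw [Set.eq_empty_iff_forall_notMem]
    intro y hy
    rw [Set.mem_iInter₂] at hy
    have hget : ∃ t : ℤ, |t| ≤ ((2*n*(m+1) : ℕ) : ℤ) ∧ (f.toEquiv ^ t) y ∈ FF := by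
      by_cases hyU : y ∈ U₁
      · exact ⟨0, by simp, by rw [hTzero]; exact Set.mem_union_left _ (subset_closure hyU)⟩
      · have hyG : y ∈ G := hyU
        obtain ⟨i, him, hyb⟩ := hcov y hyG
        have hyc : y ∈ closedBall (c i) (ρr i) := by
          have h1 : ηf (c i) ≤ ρr i := le_of_lt (hρ1 i him)
          exact mem_closedBall.mpr (le_trans (le_of_lt (mem_ball.mp hyb)) h1)
        obtain ⟨t, htb, htF⟩ := claim i him y hyc
        refine ⟨t, le_trans htb ?_, htF⟩
        have h2 : (2*n*(i+1) : ℕ) ≤ (2*n*(m+1) : ℕ) := by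
          apply Nat.mul_le_mul_left
          omega
        exact_mod_cast h2
    obtain ⟨t, htb, htF⟩ := hget
    have ht_mem : t ∈ Set.Icc (-((2*n*(m+1) : ℕ) : ℤ)) ((2*n*(m+1) : ℕ) : ℤ) :=
      Set.mem_Icc.mpr (abs_le.mp htb)
    have hyt := hy t ht_mem
    rw [Set.mem_preimage] at hyt
    exact hyt htF
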